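/- Let A be a 3×3 Hermitian matrix with equidistant eigenvalues ℓ₁ ≥ ℓ₂ ≥ ℓ₃ (i.e. ℓ₁ - ℓ₂ = ℓ₂ - ℓ₃), and let a = (A₃₂, A₁₃, A₂₁). Then ‖a‖₂ ≤ (ℓ₁ - ℓ₃)/2. -/

import Mathlib

open Matrix

lemma aux_trace_facts (A : Matrix (Fin 3) (Fin 3) ℂ) (hA : A.IsHermitian) :
    A.trace = ∑ i, (hA.eigenvalues i : ℂ) ∧
      (A * A).trace = ∑ i, (hA.eigenvalues i : ℂ) ^ 2 := by
  set U := (hA.eigenvectorUnitary : Matrix (Fin 3) (Fin 3) ℂ) with hUdef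
  set D := Matrix.diagonal (((↑) ∘ hA.eigenvalues : Fin 3 → ℂ)) with hDdef
  have hU : star U * U = 1 := by
    have := hA.eigenvectorUnitary.2
    rw [Unitary.mem_iff] at this
    exact this.1
  have hspec : A = U * D * star U := hA.spectral_theorem
  constructor
  · conv_lhs => rw [hspec]
    rw [Matrix.trace_mul_cycle, hU, Matrix.one_mul, hDdef, Matrix.trace_diagonal]
    rfl
  · have key : U * D * star U * (U * D * star U) = U * (D * D) * star U := by
      rw [Matrix.mul_assoc (U * D) (star U), Matrix.mul_assoc U D (star U),
        ← Matrix.mul_assoc (star U) U, hU, Matrix.one_mul,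
        Matrix.mul_assoc U D, ← Matrix.mul_assoc D D, ← Matrix.mul_assoc U]
    conv_lhs => rw [hspec]
    rw [key, Matrix.trace_mul_cycle, hU, Matrix.one_mul, hDdef,
      Matrix.diagonal_mul_diagonal, Matrix.trace_diagonal]
    simp [sq]

set_option maxHeartbeats 1000000 in
theorem stmt_5 (A : Matrix (Fin 3) (Fin 3) ℂ) (hA : A.IsHermitian)
    (ℓ₁ ℓ₂ ℓ₃ : ℝ) (h12 : ℓ₂ ≤ ℓ₁) (h23 : ℓ₃ ≤ ℓ₂) (heq : ℓ₁ - ℓ₂ = ℓ₂ - ℓ₃)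
    (heig : ∃ g : Equiv.Perm (Fin 3), hA.eigenvalues ∘ g = ![ℓ₁, ℓ₂, ℓ₃]) :
    Real.sqrt (‖A 2 1‖ ^ 2 + ‖A 0 2‖ ^ 2 + ‖A 1 0‖ ^ 2)
      ≤ (ℓ₁ - ℓ₃) / 2 := by
  obtain ⟨g, hg⟩ := heig
  obtain ⟨htr, htr2⟩ := aux_trace_facts A hA
  have hsum1 : ∑ i, hA.eigenvalues i = ℓ₁ + ℓ₂ + ℓ₃ := by
    rw [← Equiv.sum_comp g hA.eigenvalues]
    have : ∀ i, hA.eigenvalues (g i) = ![ℓ₁, ℓ₂, ℓ₃] i := fun i => congrFun hg i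
    simp [this, Fin.sum_univ_three]
  have hsum2 : ∑ i, (hA.eigenvalues i) ^ 2 = ℓ₁ ^ 2 + ℓ₂ ^ 2 + ℓ₃ ^ 2 := by
    rw [← Equiv.sum_comp g (fun i => hA.eigenvalues i ^ 2)]
    have : ∀ i, hA.eigenvalues (g i) = ![ℓ₁, ℓ₂, ℓ₃] i := fun i => congrFun hg i
    simp [this, Fin.sum_univ_three]
  have hdiag : ∀ i, A i i = ((A i i).re : ℂ) := by
    intro i
    have h2 : (starRingEnd ℂ) (A i i) = A i i := by
      have : Aᴴ i i = A i i := by rw [hA.eq]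
      simpa [Matrix.conjTranspose_apply] using this
    exact (Complex.conj_eq_iff_re.mp h2).symm
  have hherm : ∀ i j, A j i = (starRingEnd ℂ) (A i j) := by
    intro i j
    have : Aᴴ j i = A j i := by rw [hA.eq]
    simpa [Matrix.conjTranspose_apply] using this.symm
  have htrc : A 0 0 + A 1 1 + A 2 2 = ((ℓ₁ + ℓ₂ + ℓ₃ : ℝ) : ℂ) := by
    rw [Matrix.trace_fin_three] at htr
    rw [htr, ← hsum1]
    push_cast [Fin.sum_univ_three]
    ring
  have htr1re : (A 0 0).re + (A 1 1).re + (A 2 2).re = ℓ₁ + ℓ₂ + ℓ₃ := by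
    have := congrArg Complex.re htrc
    simpa using this
  have htr2c : (A * A).trace =
      A 0 0 * A 0 0 + A 1 1 * A 1 1 + A 2 2 * A 2 2
      + (A 0 1 * A 1 0 + A 1 0 * A 0 1)
      + (A 0 2 * A 2 0 + A 2 0 * A 0 2)
      + (A 1 2 * A 2 1 + A 2 1 * A 1 2) := by
    rw [Matrix.trace_fin_three]
    simp [Matrix.mul_apply, Fin.sum_univ_three]
    ring
  have habs : ∀ (z : ℂ), ((starRingEnd ℂ) z * z).re = ‖z‖ ^ 2 := by
    intro z
    rw [← Complex.normSq_eq_norm_sq]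
    simp [Complex.mul_re, Complex.normSq_apply]
    try ring
  have key : 2 * (‖A 2 1‖ ^ 2 + ‖A 0 2‖ ^ 2 + ‖A 1 0‖ ^ 2)
      + ((A 0 0).re ^ 2 + (A 1 1).re ^ 2 + (A 2 2).re ^ 2) = ℓ₁ ^ 2 + ℓ₂ ^ 2 + ℓ₃ ^ 2 := by
    have h2re : ((A * A).trace).re = ℓ₁ ^ 2 + ℓ₂ ^ 2 + ℓ₃ ^ 2 := by
      rw [htr2]
      rw [Fin.sum_univ_three] at hsum2 ⊢
      simp [← Complex.ofReal_pow]
      linarith [hsum2]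
    rw [htr2c] at h2re
    rw [hherm 0 1, hherm 0 2, hherm 1 2] at h2re
    have d0 := hdiag 0; have d1 := hdiag 1; have d2 := hdiag 2
    rw [d0, d1, d2] at h2re
    have a10 : ‖A 1 0‖ = ‖A 0 1‖ := by rw [hherm 0 1]; simp
    have a21 : ‖A 2 1‖ = ‖A 1 2‖ := by rw [hherm 1 2]; simp
    rw [a10, a21]
    simp only [Complex.add_re, Complex.mul_re, Complex.ofReal_re, Complex.ofReal_im,
      Complex.conj_re, Complex.conj_im] at h2re ⊢
    rw [← Complex.normSq_eq_norm_sq, ← Complex.normSq_eq_norm_sq, ← Complex.normSq_eq_norm_sq]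
    simp only [Complex.normSq_apply]
    nlinarith [h2re]
  have hX : ‖A 2 1‖ ^ 2 + ‖A 0 2‖ ^ 2 + ‖A 1 0‖ ^ 2
      ≤ ((ℓ₁ - ℓ₃) / 2) ^ 2 := by
    have hl2 : ℓ₂ = (ℓ₁ + ℓ₃) / 2 := by linarith
    have hd : (A 0 0).re + (A 1 1).re + (A 2 2).re = 3 * ℓ₂ := by
      rw [hl2]; linarith
    have h1 : (A 0 0).re ^ 2 + (A 1 1).re ^ 2 + (A 2 2).re ^ 2 ≥ 3 * ℓ₂ ^ 2 := by
      have e : 3 * ((A 0 0).re ^ 2 + (A 1 1).re ^ 2 + (A 2 2).re ^ 2) =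
          ((A 0 0).re + (A 1 1).re + (A 2 2).re) ^ 2
          + (((A 0 0).re - (A 1 1).re) ^ 2 + ((A 1 1).re - (A 2 2).re) ^ 2
            + ((A 0 0).re - (A 2 2).re) ^ 2) := by ring
      rw [hd] at e
      nlinarith [sq_nonneg ((A 0 0).re - (A 1 1).re), sq_nonneg ((A 1 1).re - (A 2 2).re),
        sq_nonneg ((A 0 0).re - (A 2 2).re), e]
    have h2 : ℓ₁ ^ 2 + ℓ₂ ^ 2 + ℓ₃ ^ 2 - 3 * ℓ₂ ^ 2 = 2 * ((ℓ₁ - ℓ₃) / 2) ^ 2 := by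
      rw [hl2]; ring
    linarith [key, h1, h2]
  calc Real.sqrt (‖A 2 1‖ ^ 2 + ‖A 0 2‖ ^ 2 + ‖A 1 0‖ ^ 2)
      ≤ Real.sqrt (((ℓ₁ - ℓ₃) / 2) ^ 2) := Real.sqrt_le_sqrt hX
    _ = (ℓ₁ - ℓ₃) / 2 := Real.sqrt_sq (by linarith)
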